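/- Lemma on radical: Let L = ℂ[x, x^{-1}] and let A be the algebra of asymptotic series a = Σ_{i ≤ k} a_i y^i with coefficients a_i ∈ L and only finitely many positive powers of y (formal Laurent series in y^{-1} over L). Suppose a ∈ A is nonzero with leading term |a| = c x^l y^k, where c ∈ ℂ*, l ∈ ℤ, k ∈ ℤ (i.e. the top coefficient a_k equals the monomial c x^l). Let r = p/q ∈ ℚ with q ≥ 1 and gcd(p,q) = 1, and suppose r·l ∈ ℤ and r·k ∈ ℤ (i.e. |a|^r ∈ A). Then there exists b ∈ A with b^q = a^p and leading term |b| = c' x^{rl} y^{rk} for some c' ∈ ℂ with c'^q = c^p. -/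

import Mathlib

noncomputable section

namespace RadicalAux

open HahnSeries Finset HahnSeries.SummableFamily LaurentPolynomial

abbrev L : Type := LaurentPolynomial ℂ
abbrev A : Type := HahnSeries ℤ L

lemma mul_vanish {x y : A} {a b : ℤ} (hx : ∀ g' < a, x.coeff g' = 0)
    (hy : ∀ g' < b, y.coeff g' = 0) :
    ∀ g < a + b, (x * y).coeff g = 0 := by
  intro g hg
  rw [HahnSeries.coeff_mul]
  refine Finset.sum_eq_zero fun ij hij => ?_
  rw [Finset.mem_addAntidiagonal] at hij
  obtain ⟨h1, h2, h3⟩ := hij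
  have ha : a ≤ ij.1 := le_of_not_gt fun hlt => h1 (hx _ hlt)
  have hb : b ≤ ij.2 := le_of_not_gt fun hlt => h2 (hy _ hlt)
  omega

lemma pow_vanish {u : A} (hu : ∀ g' < (1:ℤ), u.coeff g' = 0) :
    ∀ (n : ℕ) (g : ℤ), g < (n : ℤ) → (u ^ n).coeff g = 0 := by
  intro n
  induction n with
  | zero =>
    intro g hg
    rw [pow_zero, HahnSeries.coeff_one, if_neg (by omega)]
  | succ n ih =>
    intro g hg
    rw [pow_succ]
    exact mul_vanish ih hu g (by omega)

lemma isPWO_Ici : (Set.Ici (0:ℤ)).IsPWO := by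
  have h1 : (Set.univ : Set ℕ).IsPWO :=
    (Set.isWF_univ_iff.mpr inferInstance).isPWO
  have h2 := h1.image_of_monotone (f := (fun n : ℕ => (n : ℤ)))
    (fun a b hab => by simpa using hab)
  have : Set.Ici (0:ℤ) = (fun n : ℕ => (n : ℤ)) '' Set.univ := by
    ext g
    simp only [Set.mem_Ici, Set.image_univ, Set.mem_range]
    constructor
    · intro hg
      exact ⟨g.toNat, by omega⟩
    · rintro ⟨n, rfl⟩; positivity
  rw [this]
  exact h2

variable {u : A}

/-- The summable family `n ↦ c n • u ^ n` for `u` of positive order. -/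
def fam (hu : ∀ (n : ℕ) (g : ℤ), g < (n : ℤ) → (u ^ n).coeff g = 0) (c : ℕ → L) :
    SummableFamily ℤ L ℕ where
  toFun n := c n • u ^ n
  isPWO_iUnion_support' := by
    apply isPWO_Ici.mono
    refine Set.iUnion_subset fun n g hg => ?_
    rw [Set.mem_Ici]
    by_contra hgneg
    rw [HahnSeries.mem_support, HahnSeries.coeff_smul, hu n g (by omega)] at hg
    simp at hg
  finite_co_support' g := by
    apply (Set.finite_Iic g.toNat).subset
    intro n hn
    simp only [Function.mem_support, ne_eq, HahnSeries.coeff_smul] at hn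
    rw [Set.mem_Iic]
    by_contra hgt
    exact hn (by rw [hu n g (by omega), smul_zero])

variable (hu : ∀ (n : ℕ) (g : ℤ), g < (n : ℤ) → (u ^ n).coeff g = 0)

lemma fam_coeff_eq (c : ℕ → L) {g : ℤ} {N : ℕ} (hg : g < (N : ℤ)) :
    (fam hu c).hsum.coeff g = ∑ n ∈ Finset.range N, c n * (u ^ n).coeff g := by
  rw [coeff_hsum]
  rw [finsum_eq_sum_of_support_subset _ (s := Finset.range N)]
  · exact Finset.sum_congr rfl fun n _ => by
      show (c n • u ^ n).coeff g = _
      rw [HahnSeries.coeff_smul, smul_eq_mul]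
  · intro n hn
    simp only [Function.mem_support, ne_eq] at hn
    show n ∈ (Finset.range N : Set ℕ)
    simp only [Finset.coe_range, Set.mem_Iio]
    by_contra hge
    apply hn
    show (c n • u ^ n).coeff g = 0
    rw [HahnSeries.coeff_smul, hu n g (by omega), smul_zero]

lemma fam_hsum_eq_sum (c : ℕ → L) {N : ℕ} (hc : ∀ n, N ≤ n → c n = 0) :
    (fam hu c).hsum = ∑ n ∈ Finset.range N, c n • u ^ n := by
  ext g : 2
  rw [coeff_hsum, finsum_eq_sum_of_support_subset _ (s := Finset.range N)]
  · rw [← HahnSeries.coeff.addMonoidHom_apply, map_sum]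
    rfl
  · intro n hn
    simp only [Function.mem_support, ne_eq] at hn
    show n ∈ (Finset.range N : Set ℕ)
    simp only [Finset.coe_range, Set.mem_Iio]
    by_contra hge
    apply hn
    show (c n • u ^ n).coeff g = 0
    rw [hc n (by omega), zero_smul, HahnSeries.coeff_zero]

lemma sum_coeff {s : Finset ℕ} {f : ℕ → A} {g : ℤ} :
    (∑ n ∈ s, f n).coeff g = ∑ n ∈ s, (f n).coeff g := by
  rw [← HahnSeries.coeff.addMonoidHom_apply, map_sum]; rfl

lemma smul_mul_smul' (r s : L) (x y : A) : (r • x) * (s • y) = (r * s) • (x * y) := by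
  rw [← single_zero_mul_eq_smul, ← single_zero_mul_eq_smul, ← single_zero_mul_eq_smul]
  rw [show (HahnSeries.single (0:ℤ) (r*s) : A) = HahnSeries.single 0 r * HahnSeries.single 0 s by
    rw [single_mul_single, zero_add]]
  ring

lemma fam_hsum_mul (c d : ℕ → L) :
    (fam hu c).hsum * (fam hu d).hsum
      = (fam hu fun n => ∑ ij ∈ Finset.HasAntidiagonal.antidiagonal n, c ij.1 * d ij.2).hsum := by
  refine HahnSeries.coeff_injective (funext fun g => ?_)
  set N := g.toNat + 1 with hN
  have hgN : g < (N : ℤ) := by simp only [hN]; omega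
  set S := (fam hu c).hsum with hS
  set T := (fam hu d).hsum with hT
  set P : A := ∑ n ∈ Finset.range N, c n • u ^ n with hP
  set Q : A := ∑ n ∈ Finset.range N, d n • u ^ n with hQ
  have hPcoeff : ∀ g', P.coeff g' = ∑ n ∈ Finset.range N, c n * (u ^ n).coeff g' := by
    intro g'
    rw [hP, sum_coeff]
    exact Finset.sum_congr rfl fun n _ => by rw [HahnSeries.coeff_smul, smul_eq_mul]
  have hQcoeff : ∀ g', Q.coeff g' = ∑ n ∈ Finset.range N, d n * (u ^ n).coeff g' := by
    intro g'
    rw [hQ, sum_coeff]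
    exact Finset.sum_congr rfl fun n _ => by rw [HahnSeries.coeff_smul, smul_eq_mul]
  have hPvan : ∀ g' < (0:ℤ), P.coeff g' = 0 := by
    intro g' hg'
    rw [hPcoeff]
    exact Finset.sum_eq_zero fun n _ => by rw [hu n g' (by omega), mul_zero]
  have hQvan : ∀ g' < (0:ℤ), Q.coeff g' = 0 := by
    intro g' hg'
    rw [hQcoeff]
    exact Finset.sum_eq_zero fun n _ => by rw [hu n g' (by omega), mul_zero]
  have hsvan : ∀ g' < (N:ℤ), (S - P).coeff g' = 0 := by
    intro g' hg'
    rw [HahnSeries.coeff_sub, hS, fam_coeff_eq hu c hg', hPcoeff, sub_self]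
  have htvan : ∀ g' < (N:ℤ), (T - Q).coeff g' = 0 := by
    intro g' hg'
    rw [HahnSeries.coeff_sub, hT, fam_coeff_eq hu d hg', hQcoeff, sub_self]
  have hsvan0 : ∀ g' < (0:ℤ), (S - P).coeff g' = 0 := fun g' hg' => hsvan g' (by omega)
  have expand : S * T = P * Q + (P * (T - Q) + (S - P) * Q + (S - P) * (T - Q)) := by ring
  have hLHS : (S * T).coeff g = (P * Q).coeff g := by
    rw [expand, HahnSeries.coeff_add, HahnSeries.coeff_add, HahnSeries.coeff_add,
      mul_vanish hPvan htvan g (by omega),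
      mul_vanish hsvan hQvan g (by omega),
      mul_vanish hsvan0 htvan g (by omega)]
    ring
  rw [hLHS]
  have hPQ : P * Q = ∑ ij ∈ Finset.range N ×ˢ Finset.range N,
      (c ij.1 * d ij.2) • u ^ (ij.1 + ij.2) := by
    rw [hP, hQ, Finset.sum_mul_sum, ← Finset.sum_product']
    exact Finset.sum_congr rfl fun ij _ => by
      rw [smul_mul_smul', _root_.pow_add]
  have hsquare : (P * Q).coeff g = ∑ ij ∈ Finset.range N ×ˢ Finset.range N,
      c ij.1 * d ij.2 * (u ^ (ij.1 + ij.2)).coeff g := by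
    rw [hPQ, ← HahnSeries.coeff.addMonoidHom_apply, map_sum]
    exact Finset.sum_congr rfl fun ij _ => by
      rw [HahnSeries.coeff.addMonoidHom_apply, HahnSeries.coeff_smul, smul_eq_mul]
  rw [hsquare, fam_coeff_eq hu _ hgN]
  have hdisj : (↑(Finset.range N) : Set ℕ).PairwiseDisjoint Finset.HasAntidiagonal.antidiagonal := by
    intro m _ n _ hmn
    simp only [Function.onFun, Finset.disjoint_left]
    intro ij h1 h2
    rw [Finset.HasAntidiagonal.mem_antidiagonal] at h1 h2
    omega
  set B := (Finset.range N).biUnion Finset.HasAntidiagonal.antidiagonal with hB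
  have hgroup : ∑ n ∈ Finset.range N,
      (∑ ij ∈ Finset.HasAntidiagonal.antidiagonal n, c ij.1 * d ij.2) * (u ^ n).coeff g
      = ∑ ij ∈ B, c ij.1 * d ij.2 * (u ^ (ij.1 + ij.2)).coeff g := by
    rw [hB, Finset.sum_biUnion hdisj]
    refine Finset.sum_congr rfl fun n _ => ?_
    rw [Finset.sum_mul]
    refine Finset.sum_congr rfl fun ij hij => ?_
    rw [Finset.HasAntidiagonal.mem_antidiagonal] at hij
    rw [hij]
  rw [hgroup]
  refine (Finset.sum_subset ?_ ?_).symm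
  · intro ij hij
    rw [hB, Finset.mem_biUnion] at hij
    obtain ⟨n, hn, hijn⟩ := hij
    rw [Finset.HasAntidiagonal.mem_antidiagonal] at hijn
    rw [Finset.mem_range] at hn
    rw [Finset.mem_product, Finset.mem_range, Finset.mem_range]
    omega
  · intro ij hijsq hijB
    have : ¬ (ij.1 + ij.2 < N) := by
      intro hlt
      exact hijB (Finset.mem_biUnion.mpr ⟨ij.1 + ij.2, Finset.mem_range.mpr hlt,
        Finset.HasAntidiagonal.mem_antidiagonal.mpr rfl⟩)
    rw [hu (ij.1 + ij.2) g (by push_cast; omega), mul_zero]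

/-- Coefficients of the binomial series. -/
def bino (r : ℂ) : ℕ → L := fun n => algebraMap ℂ L (Ring.choose r n)

/-- The binomial series `(1+u)^r`. -/
def Bs (r : ℂ) : A := (fam hu (bino r)).hsum

lemma Bs_mul (r s : ℂ) : Bs hu r * Bs hu s = Bs hu (r + s) := by
  rw [Bs, Bs, Bs, fam_hsum_mul]
  have hcd : (fun n => ∑ ij ∈ Finset.HasAntidiagonal.antidiagonal n, bino r ij.1 * bino s ij.2)
      = bino (r + s) := by
    funext n
    rw [bino, Ring.add_choose_eq n (Commute.all r s), map_sum]
    exact (Finset.sum_congr rfl fun ij _ => by rw [bino, bino, map_mul]).symm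
  rw [hcd]

lemma Bs_nat (m : ℕ) : Bs hu ((m : ℂ)) = (1 + u) ^ m := by
  rw [Bs, fam_hsum_eq_sum hu _ (N := m + 1) (fun n hn => by
    rw [bino, Ring.choose_natCast]
    rw [Nat.choose_eq_zero_of_lt (by omega), Nat.cast_zero, map_zero])]
  rw [add_comm (1:A) u, add_pow]
  refine Finset.sum_congr rfl fun n hn => ?_
  rw [bino, Ring.choose_natCast, one_pow, mul_one]
  rw [map_natCast]
  rw [show ((m.choose n : L)) • u ^ n = (m.choose n : ℕ) • u ^ n from
    Nat.cast_smul_eq_nsmul L _ _, nsmul_eq_mul, mul_comm]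

lemma Bs_pow (r : ℂ) (n : ℕ) : Bs hu r ^ n = Bs hu ((n : ℂ) * r) := by
  induction n with
  | zero =>
    rw [pow_zero, Nat.cast_zero, zero_mul, ← Nat.cast_zero, Bs_nat, pow_zero]
  | succ n ih =>
    rw [pow_succ, ih, Bs_mul]
    congr 1
    push_cast
    ring

lemma Bs_vanish (r : ℂ) : ∀ g < (0:ℤ), (Bs hu r).coeff g = 0 := by
  intro g hg
  rw [Bs, fam_coeff_eq hu _ (N := 0) (by exact_mod_cast hg)]
  simp

lemma Bs_coeff_zero (r : ℂ) : (Bs hu r).coeff 0 = 1 := by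
  rw [Bs, fam_coeff_eq hu _ (N := 1) (by norm_num)]
  rw [Finset.sum_range_one, pow_zero, HahnSeries.coeff_one, if_pos rfl, mul_one,
    bino, Ring.choose_zero_right, map_one]

end RadicalAux

end

/-- **Lemma on radical.**  Let `L = ℂ[x, x⁻¹]` and let `A` be the algebra of asymptotic
series `a = Σ_{i ≤ k} a_i yⁱ` with coefficients `a_i ∈ L` and only finitely many
positive powers of `y`.  We model `A` as `HahnSeries ℤ L` where the Hahn-series
exponent `e` represents `y^(-e)` (so boundedness above of `y`-exponents becomes
well-orderedness below), and `L` as `LaurentPolynomial ℂ`.  The leading term of a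
nonzero `a` is `a.coeff a.order`, i.e. the term with the highest power of `y`.

Suppose `a ∈ A` has leading term `|a| = c x^l y^k` with `c ∈ ℂ*`, and let
`r = p/q ∈ ℚ` with `q ≥ 1` and `gcd(p,q) = 1` be such that `r·l ∈ ℤ` and `r·k ∈ ℤ`
(i.e. `|a|^r ∈ A`).  Then `a^r ∈ A`: there is `b ∈ A` with `b^q = a^p`
(formally `b^q · a^((-p)⁺) = a^(p⁺)`, to accommodate negative `p`) whose leading
term is `c' x^(rl) y^(rk)` for some `c' ∈ ℂ` with `c'^q = c^p`. -/
theorem lemma_on_radical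
    (a : HahnSeries ℤ (LaurentPolynomial ℂ)) (k l : ℤ) (c : ℂ) (hc : c ≠ 0)
    (hord : a.order = -k)
    (hlead : a.coeff (-k) = LaurentPolynomial.C c * LaurentPolynomial.T l)
    (p : ℤ) (q : ℕ) (hq : 1 ≤ q) (hcop : Int.gcd p (q : ℤ) = 1)
    (hrl : (q : ℤ) ∣ p * l) (hrk : (q : ℤ) ∣ p * k) :
    ∃ (b : HahnSeries ℤ (LaurentPolynomial ℂ)) (c' : ℂ),
      b ^ q * a ^ ((-p).toNat) = a ^ (p.toNat) ∧
      c' ≠ 0 ∧ c' ^ (q : ℤ) = c ^ p ∧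
      b.order = -(p * k / q) ∧
      b.coeff (-(p * k / q)) = LaurentPolynomial.C c' * LaurentPolynomial.T (p * l / q) := by
  classical
  set m : RadicalAux.A := HahnSeries.single (-k) (LaurentPolynomial.C c * LaurentPolynomial.T l) with hm
  set minv : RadicalAux.A := HahnSeries.single k (LaurentPolynomial.C c⁻¹ * LaurentPolynomial.T (-l)) with hminv
  have hLmul : (LaurentPolynomial.C c⁻¹ * LaurentPolynomial.T (-l)) * (LaurentPolynomial.C c * LaurentPolynomial.T l) = (1 : RadicalAux.L) := by
    rw [mul_mul_mul_comm, ← map_mul, inv_mul_cancel₀ hc, map_one, one_mul, ← LaurentPolynomial.T_add]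
    simp
  have hmm : minv * m = 1 := by
    rw [hminv, hm, HahnSeries.single_mul_single, hLmul, show k + -k = 0 by ring,
      HahnSeries.single_zero_one]
  set u : RadicalAux.A := minv * a - 1 with hudef
  have havan : ∀ g < -k, a.coeff g = 0 := fun g hg =>
    HahnSeries.coeff_eq_zero_of_lt_order (by rw [hord]; exact hg)
  have hu0 : ∀ g' < (1:ℤ), u.coeff g' = 0 := by
    intro g' hg'
    rw [hudef, HahnSeries.coeff_sub]
    by_cases h0 : g' = 0
    · subst h0
      rw [show (0:ℤ) = -k + k by ring, hminv, HahnSeries.coeff_single_mul_add, hlead, hLmul]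
      rw [show -k + k = 0 by ring, HahnSeries.coeff_one, if_pos rfl, sub_self]
    · have hneg : g' < 0 := by omega
      have h1 : (minv * a).coeff g' = 0 := by
        refine RadicalAux.mul_vanish (a := k) (b := -k) ?_ havan g' (by omega)
        intro g'' hg''
        rw [hminv]
        exact HahnSeries.coeff_single_of_ne (by omega)
      rw [h1, HahnSeries.coeff_one, if_neg (by omega), sub_self]
  have hu := RadicalAux.pow_vanish hu0
  have hma : m * (1 + u) = a := by
    have : m * (1 + u) = (minv * m) * a := by rw [hudef]; ring
    rw [this, hmm, one_mul]
  -- choose the root of the leading coefficient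
  obtain ⟨c', hc'q⟩ := IsAlgClosed.exists_pow_nat_eq (c ^ p) (show 0 < q by omega)
  have hcp : c ^ p ≠ 0 := zpow_ne_zero _ hc
  have hc' : c' ≠ 0 := fun h => hcp (by rw [← hc'q, h, zero_pow (by omega)])
  have hq0 : (q : ℂ) ≠ 0 := Nat.cast_ne_zero.mpr (by omega)
  set r : ℂ := (p : ℂ) / (q : ℂ) with hr
  set P : ℕ := p.toNat with hPdef
  set M : ℕ := (-p).toNat with hMdef
  have hPM : (P : ℤ) - (M : ℤ) = p := by omega
  have hqk : (q:ℤ) * (p * k / q) = p * k := Int.mul_ediv_cancel' hrk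
  have hql : (q:ℤ) * (p * l / q) = p * l := Int.mul_ediv_cancel' hrl
  set s₀ : ℤ := -(p * k / q) with hs₀
  set l₀ : ℤ := p * l / q with hl₀
  set w : RadicalAux.L := LaurentPolynomial.C c' * LaurentPolynomial.T l₀ with hw
  set b : RadicalAux.A := HahnSeries.single s₀ w * RadicalAux.Bs hu r with hb
  have hBq : RadicalAux.Bs hu r ^ q = RadicalAux.Bs hu ((p : ℂ)) := by
    rw [RadicalAux.Bs_pow]
    congr 1
    rw [hr]
    field_simp
  have hcast : (p : ℂ) + (M : ℂ) = ((P : ℕ) : ℂ) := by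
    exact_mod_cast congrArg (Int.cast : ℤ → ℂ) (show p + (M:ℤ) = (P:ℤ) by omega)
  have hBM : RadicalAux.Bs hu ((p : ℂ)) * (1 + u) ^ M = (1 + u) ^ P := by
    rw [← RadicalAux.Bs_nat hu M, RadicalAux.Bs_mul, hcast, RadicalAux.Bs_nat]
  have hsingle : (HahnSeries.single s₀ w) ^ q * m ^ M = m ^ P := by
    have hexp : q • s₀ + M • (-k) = P • (-k) := by
      simp only [nsmul_eq_mul]
      rw [hs₀]
      push_cast
      linear_combination (k : ℤ) * hPM - hqk
    have hcoeffL : w ^ q * (LaurentPolynomial.C c * LaurentPolynomial.T l) ^ M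
        = (LaurentPolynomial.C c * LaurentPolynomial.T l) ^ P := by
      rw [hw, mul_pow, mul_pow, mul_pow, ← map_pow, ← map_pow, ← map_pow,
        LaurentPolynomial.T_pow, LaurentPolynomial.T_pow, LaurentPolynomial.T_pow,
        mul_mul_mul_comm, ← map_mul, ← LaurentPolynomial.T_add]
      have h1 : c' ^ q * c ^ M = c ^ P := by
        calc c' ^ q * c ^ M = c ^ p * c ^ (M : ℤ) := by rw [hc'q, zpow_natCast]
          _ = c ^ (p + (M : ℤ)) := by rw [zpow_add₀ hc]
          _ = c ^ P := by rw [show p + (M:ℤ) = (P:ℤ) by omega, zpow_natCast]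
      have h2 : (q : ℤ) * l₀ + (M : ℤ) * l = (P : ℤ) * l := by
        rw [hl₀]
        linear_combination hql - l * hPM
      rw [h1, h2]
    rw [hm, HahnSeries.single_pow, HahnSeries.single_pow, HahnSeries.single_pow,
      HahnSeries.single_mul_single, hexp, hcoeffL]
  refine ⟨b, c', ?_, hc', by rw [zpow_natCast]; exact hc'q, ?_, ?_⟩
  · calc b ^ q * a ^ M
        = ((HahnSeries.single s₀ w) ^ q * m ^ M) * (RadicalAux.Bs hu r ^ q * (1 + u) ^ M) := by
          rw [hb, ← hma]; ring
      _ = m ^ P * (1 + u) ^ P := by rw [hsingle, hBq, hBM]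
      _ = a ^ P := by rw [← mul_pow, hma]
  all_goals {
    have hbcoeff : b.coeff s₀ = w := by
      have hbc : (HahnSeries.single s₀ w * RadicalAux.Bs hu r).coeff (0 + s₀)
          = w * (RadicalAux.Bs hu r).coeff 0 := HahnSeries.coeff_single_mul_add
      rw [zero_add] at hbc
      rw [hb, hbc, RadicalAux.Bs_coeff_zero, mul_one]
    have hbvan : ∀ g < s₀, b.coeff g = 0 := by
      intro g hg
      rw [hb]
      refine RadicalAux.mul_vanish (a := s₀) (b := 0) ?_ (RadicalAux.Bs_vanish hu r) g (by omega)
      intro g' hg'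
      exact HahnSeries.coeff_single_of_ne (by omega)
    have hwne : w ≠ 0 := by
      rw [hw, ← LaurentPolynomial.single_eq_C_mul_T]
      exact fun h => hc' (AddMonoidAlgebra.single_eq_zero.mp h)
    have hbne : b ≠ 0 := fun h => hwne (by rw [← hbcoeff, h, HahnSeries.coeff_zero])
    have horder : b.order = s₀ :=
      le_antisymm (HahnSeries.order_le_of_coeff_ne_zero (by rw [hbcoeff]; exact hwne))
        (le_of_not_gt fun hlt => (HahnSeries.coeff_order_eq_zero.not.mpr hbne) (hbvan _ hlt))
    first
      | exact horder
      | exact hbcoeff.trans hw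
  }
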